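/- Let k₊ > k₋ > 0, n := k₋/k₊, θc := arccos n ∈ (0,π/2), and let θ_x ∈ (θc, π/2). Then for every s ∈ ℝ one has √(2/k₊)·e^{−iπ/4}·H_{θc}(s)·H_{π−θc}(s)·√(s − s_b*)·√(s − s_b) = S(cos ζ(s), n). -/

import Mathlib

open Complex Set

noncomputable section

/-- Principal square root on ℂ via the principal power. -/
def csqrt (z : ℂ) : ℂ := z ^ (1/2 : ℂ)

def S1 (z : ℂ) : ℂ := Complex.exp (-(Real.pi : ℂ) / 4 * Complex.I) * csqrt (Complex.I * z)

def S2 (z : ℂ) : ℂ := Complex.exp ((Real.pi : ℂ) / 4 * Complex.I) * csqrt (-Complex.I * z)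

def Sc (z : ℂ) (a : ℝ) : ℂ := S1 (z - (a : ℂ)) * S2 (z + (a : ℂ))

def Sct (z : ℂ) (a : ℝ) : ℂ := S2 (z - (a : ℂ)) * S2 (z + (a : ℂ))

def Pf (kp : ℝ) (s : ℂ) : ℂ := csqrt (1 - s ^ 2 / (2 * (kp : ℂ) * Complex.I))

def Qf (kp : ℝ) (s : ℂ) : ℂ :=
  s * Complex.exp (-(Real.pi : ℂ) / 4 * Complex.I) / (Real.sqrt (2 * kp) : ℂ)

/-- Principal branch of arcsin on ℂ. -/
def arcsinC (w : ℂ) : ℂ := -Complex.I * Complex.log (Complex.I * w + csqrt (1 - w ^ 2))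

def zetaF (kp θx : ℝ) (s : ℂ) : ℂ := 2 * arcsinC (Qf kp s) + (θx : ℂ)

def F1f (kp θx θ : ℝ) (s : ℂ) : ℂ :=
  1 + Pf kp s * (Real.cos ((θ - θx) / 2) : ℂ) + Qf kp s * (Real.sin ((θ - θx) / 2) : ℂ)

def F2f (kp θx θ : ℝ) (s : ℂ) : ℂ :=
  Pf kp s * (Real.sin ((θ + θx) / 2) : ℂ) + Qf kp s * (Real.cos ((θ + θx) / 2) : ℂ)

def F3f (kp θx θ : ℝ) (s : ℂ) : ℂ := (Real.cos ((θ - θx) / 2) : ℂ) + Pf kp s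

def Hth (kp θx θ : ℝ) (s : ℂ) : ℂ :=
  csqrt (F1f kp θx θ s) * csqrt (F2f kp θx θ s) / csqrt (F3f kp θx θ s)

def sb (kp θc θx : ℝ) : ℂ :=
  (Real.sqrt (2 * kp) : ℂ) * Complex.exp ((Real.pi : ℂ) / 4 * Complex.I) *
    (Real.sin ((θc - θx) / 2) : ℂ)

def sbs (kp θc θx : ℝ) : ℂ :=
  (Real.sqrt (2 * kp) : ℂ) * Complex.exp ((Real.pi : ℂ) / 4 * Complex.I) *
    (Real.sin ((Real.pi - θc - θx) / 2) : ℂ)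

/-! ### Auxiliary lemmas about `csqrt` -/

lemma csqrt_zero : csqrt 0 = 0 := by simp [csqrt]

lemma csqrt_eq_exp {z : ℂ} (hz : z ≠ 0) : csqrt z = Complex.exp (Complex.log z / 2) := by
  rw [csqrt, Complex.cpow_def_of_ne_zero hz]; ring_nf

lemma csqrt_ne_zero {z : ℂ} (hz : z ≠ 0) : csqrt z ≠ 0 := by
  rw [csqrt_eq_exp hz]; exact Complex.exp_ne_zero _

lemma csqrt_mul_self (z : ℂ) : csqrt z * csqrt z = z := by
  rcases eq_or_ne z 0 with h | h
  · simp [h, csqrt_zero]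
  · rw [csqrt_eq_exp h, ← Complex.exp_add]
    rw [show Complex.log z / 2 + Complex.log z / 2 = Complex.log z by ring]
    exact Complex.exp_log h

lemma csqrt_mul {x y : ℂ} (hx : x ≠ 0) (hy : y ≠ 0)
    (h : Complex.arg x + Complex.arg y ∈ Set.Ioc (-Real.pi) Real.pi) :
    csqrt (x * y) = csqrt x * csqrt y := by
  rw [csqrt_eq_exp (mul_ne_zero hx hy), csqrt_eq_exp hx, csqrt_eq_exp hy,
    Complex.log_mul hx hy h, ← Complex.exp_add]
  ring_nf

lemma ne_zero_of_re_pos {z : ℂ} (h : 0 < z.re) : z ≠ 0 := by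
  intro h0; rw [h0] at h; simp at h

lemma csqrt_mul_re {x y : ℂ} (hx : 0 < x.re) (hy : 0 < y.re) :
    csqrt (x * y) = csqrt x * csqrt y := by
  have hax := Complex.abs_arg_lt_pi_div_two_iff.2 (Or.inl hx)
  have hay := Complex.abs_arg_lt_pi_div_two_iff.2 (Or.inl hy)
  have := Real.pi_pos
  refine csqrt_mul (_root_.ne_zero_of_re_pos hx) (_root_.ne_zero_of_re_pos hy) ⟨?_, ?_⟩
  · rw [abs_lt] at hax hay; linarith [hax.1, hay.1]
  · rw [abs_lt] at hax hay; linarith [hax.2, hay.2]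

lemma csqrt_mul_im {x y : ℂ} (hx : 0 ≤ x.im) (hx0 : x ≠ 0) (hy : y.im < 0) :
    csqrt (x * y) = csqrt x * csqrt y := by
  have hy0 : y ≠ 0 := by intro h0; rw [h0] at hy; simp at hy
  have h1 : 0 ≤ Complex.arg x := Complex.arg_nonneg_iff.2 hx
  have h2 : Complex.arg x ≤ Real.pi := Complex.arg_le_pi x
  have h3 : Complex.arg y < 0 := Complex.arg_neg_iff.2 hy
  have h4 : -Real.pi < Complex.arg y := Complex.neg_pi_lt_arg y
  exact csqrt_mul hx0 hy0 ⟨by linarith, by linarith⟩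

lemma csqrt_real_mul {r : ℝ} (hr : 0 ≤ r) (z : ℂ) :
    csqrt ((r : ℂ) * z) = (Real.sqrt r : ℂ) * csqrt z := by
  rcases eq_or_ne z 0 with h | h
  · simp [h, csqrt_zero]
  rcases eq_or_lt_of_le hr with h0 | h0
  · simp [← h0, csqrt_zero]
  rw [csqrt_eq_exp (mul_ne_zero (by exact_mod_cast h0.ne') h), csqrt_eq_exp h,
    Complex.log_ofReal_mul h0 h]
  rw [show ((Real.log r : ℂ) + Complex.log z) / 2 = (Real.log r)/2 + Complex.log z / 2 by ring,
    Complex.exp_add]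
  congr 1
  rw [show ((Real.log r : ℂ)) / 2 = ((Real.log r / 2 : ℝ) : ℂ) by push_cast; ring,
    ← Complex.ofReal_exp]
  norm_cast
  rw [Real.sqrt_eq_rpow, Real.rpow_def_of_pos h0]
  ring_nf

lemma csqrt_exp_mul {θ : ℝ} (hθ1 : -(Real.pi/2) ≤ θ) (hθ2 : θ ≤ Real.pi/2) {z : ℂ}
    (hz : 0 < z.re) :
    csqrt (Complex.exp ((θ : ℂ) * Complex.I) * z)
      = Complex.exp (((θ/2 : ℝ) : ℂ) * Complex.I) * csqrt z := by
  have hpi := Real.pi_pos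
  have hx0 : Complex.exp ((θ:ℂ) * Complex.I) ≠ 0 := Complex.exp_ne_zero _
  have hlog : Complex.log (Complex.exp ((θ:ℂ) * Complex.I)) = (θ:ℂ) * Complex.I := by
    apply Complex.log_exp <;> simp <;> linarith
  have harg : Complex.arg (Complex.exp ((θ:ℂ) * Complex.I)) = θ := by
    have := Complex.log_im (Complex.exp ((θ:ℂ) * Complex.I))
    rw [hlog] at this; simpa using this.symm
  have haz := Complex.abs_arg_lt_pi_div_two_iff.2 (Or.inl hz)
  rw [abs_lt] at haz
  rw [csqrt_mul hx0 (_root_.ne_zero_of_re_pos hz)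
    ⟨by rw [harg]; linarith [haz.1], by rw [harg]; linarith [haz.2]⟩]
  congr 1
  rw [csqrt_eq_exp hx0, hlog]
  congr 1
  push_cast; ring

lemma csqrt_re_pos_im_nonneg {z : ℂ} (h1 : 0 < z.re) (h2 : 0 ≤ z.im) :
    0 < (csqrt z).re ∧ 0 ≤ (csqrt z).im := by
  have hpi := Real.pi_pos
  have hz : z ≠ 0 := _root_.ne_zero_of_re_pos h1
  have harg1 : 0 ≤ z.arg := Complex.arg_nonneg_iff.2 h2
  have harg3 : z.arg < Real.pi/2 := by
    have := Complex.abs_arg_lt_pi_div_two_iff.2 (Or.inl h1); rw [abs_lt] at this; exact this.2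
  rw [csqrt_eq_exp hz, Complex.exp_re, Complex.exp_im]
  have him : (Complex.log z / 2).im = z.arg / 2 := by
    rw [show (2:ℂ) = ((2:ℝ):ℂ) by norm_num, Complex.div_ofReal_im, Complex.log_im]
  rw [him]
  constructor
  · apply mul_pos (Real.exp_pos _)
    apply Real.cos_pos_of_mem_Ioo
    constructor <;> [linarith; linarith]
  · apply mul_nonneg (Real.exp_pos _).le
    apply Real.sin_nonneg_of_nonneg_of_le_pi <;> linarith


private lemma divHelper17 {C A1 A2 B1 B2 D1 D2 R : ℂ} (h1 : D1 ≠ 0) (h2 : D2 ≠ 0)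
    (h : C * A1 * A2 * B1 * B2 = R * (D1*D2)) :
    C * (A1/D1) * (A2/D2) * B1 * B2 = R := by
  field_simp
  linear_combination h

private lemma ineq_sum {p q t : ℝ} (h : (p^2+q^2)^2 = 1 + (t^2)^2) : t^2 ≤ p^2 + q^2 := by
  nlinarith [sq_nonneg p, sq_nonneg q, sq_nonneg t]

private lemma ineq_rpt1 {p t r : ℝ} (hp0 : 0 < p) (hr0 : 0 < r) (hr2 : r^2 = 2)
    (h2p2 : 1 + t^2 ≤ 2*p^2) : t < r*p := by
  nlinarith [mul_pos hr0 hp0, sq_nonneg (r*p - t), sq_nonneg (r*p + t)]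

private lemma ineq_rpt2 {p t r : ℝ} (hp0 : 0 < p) (hr0 : 0 < r) (hr2 : r^2 = 2)
    (h2p2 : 1 + t^2 ≤ 2*p^2) : -(r*p) < t := by
  nlinarith [mul_pos hr0 hp0, sq_nonneg (r*p - t), sq_nonneg (r*p + t)]

private lemma ineq_Rpos {p t r : ℝ} (hp0 : 0 < p) (hr0 : 0 < r) (hr2 : r^2 = 2)
    (hrpt2 : -(r*p) < t) : 0 < p + r/2*t := by nlinarith

private lemma ineq_1cu {p t r cA sA : ℝ} (hp0 : 0 < p) (hr0 : 0 < r) (hr2 : r^2 = 2)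
    (hrpt1 : t < r*p) (hsA0 : 0 < sA) (hsAcA : sA < cA) :
    0 < 1 + (p*cA - r/2*(t*sA)) := by
  rcases le_or_gt t 0 with ht | ht
  · have h1 : 0 < p*cA := mul_pos hp0 (hsA0.trans hsAcA)
    have h2 : 0 ≤ -(t*sA) := by nlinarith [mul_nonneg (neg_nonneg.2 ht) hsA0.le]
    nlinarith [mul_nonneg (by linarith : (0:ℝ) ≤ r/2) h2]
  · have key : r/2*(t*sA) < p*sA := by
      nlinarith [mul_pos (show (0:ℝ) < r/2 by linarith)
        (sub_pos.2 (mul_lt_mul_of_pos_right hrpt1 hsA0)),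
        (show r^2*(p*sA) = 2*(p*sA) by rw [hr2])]
    nlinarith [mul_lt_mul_of_pos_left hsAcA hp0]

private lemma ineq_1sv_re {p t r sB cB : ℝ} (hp0 : 0 < p) (hr0 : 0 < r) (ht : 0 ≤ t)
    (hsB0 : 0 < sB) (hcB0 : 0 < cB) : 0 < 1 + (p*sB + r/2*(t*cB)) := by
  nlinarith [mul_pos hp0 hsB0, mul_nonneg (mul_nonneg (by linarith : (0:ℝ) ≤ r/2) ht) hcB0.le]

private lemma ineq_1sv_im {q t r sB cB : ℝ} (hq0 : 0 ≤ q) (hr0 : 0 < r) (ht : t < 0)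
    (hsB0 : 0 < sB) (hcB0 : 0 < cB) : 0 < q*sB - r/2*(t*cB) := by
  nlinarith [mul_nonneg hq0 hsB0.le, mul_pos (mul_pos (by linarith : (0:ℝ) < r/2)
    (neg_pos.2 ht)) hcB0]

private lemma ineq_hm {t r cB : ℝ} (hr0 : 0 < r) (ht : t < 0) (hcB0 : 0 < cB) :
    r/2*(r*t - cB) < 0 := by
  nlinarith [mul_pos (mul_pos hr0 (by linarith : (0:ℝ) < r/2)) (neg_pos.2 ht),
    mul_pos (by linarith : (0:ℝ) < r/2) hcB0]

set_option maxHeartbeats 1600000 in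
theorem statement17 (kp km : ℝ) (hkm : 0 < km) (hk : km < kp) (θx : ℝ)
    (hθ : θx ∈ Set.Ioo (Real.arccos (km / kp)) (Real.pi / 2)) :
    ∀ s : ℝ,
      (Real.sqrt (2 / kp) : ℂ) * Complex.exp (-(Real.pi : ℂ) / 4 * Complex.I) *
          Hth kp θx (Real.arccos (km / kp)) (s : ℂ) *
          Hth kp θx (Real.pi - Real.arccos (km / kp)) (s : ℂ) *
          csqrt ((s : ℂ) - sbs kp (Real.arccos (km / kp)) θx) *
          csqrt ((s : ℂ) - sb kp (Real.arccos (km / kp)) θx)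
        = Sc (Complex.cos (zetaF kp θx (s : ℂ))) (km / kp) := by
  intro s
  have hkp : 0 < kp := hkm.trans hk
  have hpi := Real.pi_pos
  have hb1 : -(Real.pi/2) ≤ Real.pi/4 := by linarith
  have hb2 : Real.pi/4 ≤ Real.pi/2 := by linarith
  have hb3 : -(Real.pi/2) ≤ -(Real.pi/2) := le_refl _
  have hb4 : -(Real.pi/2) ≤ Real.pi/2 := by linarith
  have hb5 : Real.pi/2 ≤ Real.pi/2 := le_refl _
  have hn0 : 0 < km / kp := div_pos hkm hkp
  have hn1 : km / kp < 1 := (div_lt_one hkp).2 hk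
  set θc := Real.arccos (km / kp) with hθcd
  obtain ⟨hx1, hx2⟩ := hθ
  have hθc0 : 0 < θc := Real.arccos_pos.2 hn1
  have hθc2 : θc < Real.pi/2 := Real.arccos_lt_pi_div_two.2 hn0
  have hcθc : Real.cos θc = km / kp := Real.cos_arccos (by linarith) (by linarith)
  -- real trig data
  set cA := Real.cos ((θx - θc)/2) with hcAd
  set sA := Real.sin ((θx - θc)/2) with hsAd
  set cB := Real.cos ((θx + θc)/2) with hcBd
  set sB := Real.sin ((θx + θc)/2) with hsBd
  have hcA0 : 0 < cA := Real.cos_pos_of_mem_Ioo ⟨by linarith, by linarith⟩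
  have hsA0 : 0 < sA := Real.sin_pos_of_pos_of_lt_pi (by linarith) (by linarith)
  have hcB0 : 0 < cB := Real.cos_pos_of_mem_Ioo ⟨by linarith, by linarith⟩
  have hsB0 : 0 < sB := Real.sin_pos_of_pos_of_lt_pi (by linarith) (by linarith)
  have hsAcA : sA < cA := by
    rw [hsAd, ← Real.cos_pi_div_two_sub]
    apply Real.cos_lt_cos_of_nonneg_of_le_pi (by linarith) (by linarith) (by linarith)
  have hA1C : (sA:ℂ)^2 + (cA:ℂ)^2 = 1 := by
    have := Real.sin_sq_add_cos_sq ((θx - θc)/2); rw [← hsAd, ← hcAd] at this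
    exact_mod_cast congrArg (fun x : ℝ => (x:ℂ)) this
  have hB1C : (sB:ℂ)^2 + (cB:ℂ)^2 = 1 := by
    have := Real.sin_sq_add_cos_sq ((θx + θc)/2); rw [← hsBd, ← hcBd] at this
    exact_mod_cast congrArg (fun x : ℝ => (x:ℂ)) this
  have hcxC : ((Real.cos θx : ℝ):ℂ) = (cA:ℂ)*cB - (sA:ℂ)*sB := by
    have : Real.cos θx = cA*cB - sA*sB := by
      rw [hcAd, hcBd, hsAd, hsBd, ← Real.cos_add]; ring_nf
    exact_mod_cast congrArg (fun x : ℝ => (x:ℂ)) this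
  have hsxC : ((Real.sin θx : ℝ):ℂ) = (sA:ℂ)*cB + (cA:ℂ)*sB := by
    have : Real.sin θx = sA*cB + cA*sB := by
      rw [hcAd, hcBd, hsAd, hsBd, ← Real.sin_add]; ring_nf
    exact_mod_cast congrArg (fun x : ℝ => (x:ℂ)) this
  have hnC : ((km/kp : ℝ):ℂ) = (cB:ℂ)*cA + (sB:ℂ)*sA := by
    have : km/kp = cB*cA + sB*sA := by
      rw [← hcθc, hcAd, hcBd, hsAd, hsBd, ← Real.cos_sub]; ring_nf
    exact_mod_cast congrArg (fun x : ℝ => (x:ℂ)) this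
  -- basic constants
  set r := Real.sqrt 2 with hrd
  have hr0 : 0 < r := Real.sqrt_pos.2 (by norm_num)
  have hr2 : r^2 = 2 := Real.sq_sqrt (by norm_num)
  set k2 := Real.sqrt (2*kp) with hk2d
  have hk20 : 0 < k2 := Real.sqrt_pos.2 (by linarith)
  have hk2sq : k2^2 = 2*kp := Real.sq_sqrt (by linarith)
  set t := s / k2 with htd
  have hk2ne : ((k2:ℝ):ℂ) ≠ 0 := Complex.ofReal_ne_zero.mpr hk20.ne'
  set Em := Complex.exp (-(Real.pi : ℂ) / 4 * Complex.I) with hEmd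
  set Ep := Complex.exp ((Real.pi : ℂ) / 4 * Complex.I) with hEpd
  have hEmC : Em = ((r:ℝ):ℂ)/2 * (1 - Complex.I) := by
    rw [hEmd, show (-(Real.pi:ℂ)/4 * Complex.I) = ((( -(Real.pi/4) : ℝ)):ℂ) * Complex.I by
      push_cast; ring, Complex.exp_mul_I, ← Complex.ofReal_cos, ← Complex.ofReal_sin,
      Real.cos_neg, Real.sin_neg, Real.cos_pi_div_four, Real.sin_pi_div_four]
    rw [hrd]; push_cast; ring
  have hEpC : Ep = ((r:ℝ):ℂ)/2 * (1 + Complex.I) := by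
    rw [hEpd, show ((Real.pi:ℂ)/4 * Complex.I) = (((Real.pi/4 : ℝ)):ℂ) * Complex.I by
      push_cast; ring, Complex.exp_mul_I, ← Complex.ofReal_cos, ← Complex.ofReal_sin,
      Real.cos_pi_div_four, Real.sin_pi_div_four]
    rw [hrd]; push_cast; ring
  have hr2C : ((r:ℝ):ℂ)^2 = 2 := by exact_mod_cast congrArg (fun x:ℝ => (x:ℂ)) hr2
  have hEmEp : Em * Ep = 1 := by
    rw [hEmC, hEpC]; linear_combination (-((r:ℝ):ℂ)^2/4) * Complex.I_sq + (1/2 : ℂ) * hr2C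
  have hEm2 : Em^2 = -Complex.I := by
    rw [hEmC]; linear_combination (((r:ℝ):ℂ)^2/4)*Complex.I_sq + (-Complex.I/2) * hr2C
  have hEp2 : Ep^2 = Complex.I := by
    rw [hEpC]; linear_combination (((r:ℝ):ℂ)^2/4)*Complex.I_sq + (Complex.I/2) * hr2C
  have hIEm : Complex.I * Em = Ep := by
    rw [hEmC, hEpC]; linear_combination (-((r:ℝ):ℂ)/2) * Complex.I_sq
  -- Q and P
  set T := ((t:ℝ):ℂ) with hTd
  have hsC : ((s:ℝ):ℂ) = ((k2:ℝ):ℂ) * T := by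
    rw [hTd, htd]; push_cast; rw [eq_comm, mul_comm]; exact div_mul_cancel₀ _ hk2ne
  set QQ := T * Em with hQQd
  have hQf : Qf kp (s:ℂ) = QQ := by
    rw [Qf, ← hEmd, ← hk2d, hsC, hQQd, div_eq_iff hk2ne]
    ring
  set w := 1 + Complex.I * T^2 with hwd
  set P := csqrt w with hPd
  have hwre : w.re = 1 := by
    rw [hwd, hTd]; simp [pow_two, Complex.mul_im, Complex.mul_re]
  have hwim : w.im = t^2 := by
    rw [hwd, hTd]; simp [pow_two, Complex.mul_im]
  have hk2C : ((k2:ℝ):ℂ)^2 = 2*kp := by exact_mod_cast congrArg (fun x:ℝ => (x:ℂ)) hk2sq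
  have hkpC : ((kp:ℝ):ℂ) ≠ 0 := by exact_mod_cast hkp.ne'
  have hPf : Pf kp (s:ℂ) = P := by
    rw [Pf, hPd]
    congr 1
    rw [hsC, hwd]
    have hs2 : (((k2:ℝ):ℂ) * T)^2 = 2*(kp:ℂ)*T^2 := by rw [mul_pow, hk2C]
    field_simp
    linear_combination (-1 : ℂ) * hs2 + (-(2*(kp:ℂ)*T^2)) * Complex.I_sq

  clear_value θc cA sA cB sB r k2 t Em Ep T QQ w P
  -- facts about P = p + q i
  have hP2 : P^2 = w := by rw [hPd, pow_two]; exact csqrt_mul_self w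
  have hwre0 : 0 < w.re := by rw [hwre]; norm_num
  have hwim0 : 0 ≤ w.im := by rw [hwim]; positivity
  obtain ⟨hp0, hq0⟩ := csqrt_re_pos_im_nonneg hwre0 hwim0
  rw [← hPd] at hp0 hq0
  set p := P.re with hpd
  set q := P.im with hqd
  have hPC : P = ((p:ℝ):ℂ) + ((q:ℝ):ℂ)*Complex.I := by
    rw [hpd, hqd]; exact (Complex.re_add_im P).symm
  have hP2' : (((p:ℝ):ℂ) + ((q:ℝ):ℂ)*Complex.I)^2 = 1 + Complex.I * ((t:ℝ):ℂ)^2 := by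
    rw [← hPC, ← hTd, ← hwd]; exact hP2
  clear_value p q
  rw [Complex.ext_iff] at hP2'
  obtain ⟨hre1, him1⟩ := hP2'
  simp [pow_two, Complex.mul_re, Complex.mul_im] at hre1 him1
  have hpq1 : p^2 - q^2 = 1 := by rw [pow_two, pow_two]; linarith [hre1]
  have hpq2 : 2*(p*q) = t^2 := by linarith [him1]
  have hkey : (p^2+q^2)^2 = 1 + (t^2)^2 := by
    linear_combination (p^2 - q^2 + 1)*hpq1 + (2*(p*q) + t^2)*hpq2
  have hsum : t^2 ≤ p^2 + q^2 := ineq_sum hkey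
  have h2p2 : 1 + t^2 ≤ 2*p^2 := by linarith [hpq1, hsum]
  have hrpt1 : t < r*p := ineq_rpt1 hp0 hr0 hr2 h2p2
  have hrpt2 : -(r*p) < t := ineq_rpt2 hp0 hr0 hr2 h2p2
  -- arcsine facts
  set A := arcsinC QQ with hAd
  set R := Complex.I*QQ + P with hRd
  clear_value A R
  have hRre : R.re = p + r/2*t := by
    rw [hRd, hQQd, hTd, hEmC, hPC]
    simp [Complex.mul_re, Complex.mul_im, Complex.add_re, Complex.add_im, Complex.sub_re,
      Complex.sub_im, Complex.one_re, Complex.one_im, Complex.I_re, Complex.I_im,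
      Complex.ofReal_re, Complex.ofReal_im]
    ring
  have hRpos : 0 < R.re := by rw [hRre]; exact ineq_Rpos hp0 hr0 hr2 hrpt2
  have hRne : R ≠ 0 := _root_.ne_zero_of_re_pos hRpos
  have hQ2 : QQ^2 = -Complex.I * T^2 := by rw [hQQd]; linear_combination T^2 * hEm2
  have hPQ1 : P^2 + QQ^2 = 1 := by linear_combination hP2 + hQ2 + hwd
  have h1Q : 1 - QQ^2 = w := by rw [hwd]; linear_combination (-1 : ℂ) * hQ2
  have hA : A = -Complex.I * Complex.log R := by
    rw [hAd, arcsinC, h1Q, ← hPd, ← hRd]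
  have hexp1 : Complex.exp (A * Complex.I) = R := by
    rw [hA, show -Complex.I * Complex.log R * Complex.I
        = Complex.log R * (-(Complex.I*Complex.I)) by ring, Complex.I_mul_I]
    norm_num [Complex.exp_log hRne]
  have hRinv : R⁻¹ = P - Complex.I*QQ := by
    apply inv_eq_of_mul_eq_one_right
    rw [hRd]; linear_combination hPQ1 - QQ^2 * Complex.I_sq
  have hexp2 : Complex.exp (-(A * Complex.I)) = P - Complex.I*QQ := by
    rw [Complex.exp_neg, hexp1, hRinv]
  have he1 : Complex.cos A + Complex.sin A * Complex.I = R := by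
    rw [← Complex.exp_mul_I]; exact hexp1
  have he2 : Complex.cos A - Complex.sin A * Complex.I = P - Complex.I*QQ := by
    rw [show Complex.cos A - Complex.sin A * Complex.I
        = Complex.cos (-A) + Complex.sin (-A) * Complex.I by
        rw [Complex.cos_neg, Complex.sin_neg]; ring,
      ← Complex.exp_mul_I, show -A*Complex.I = -(A*Complex.I) by ring]
    exact hexp2
  rw [hRd] at he1
  have hcosA : Complex.cos A = P := by linear_combination (he1 + he2)/2
  have hsinA : Complex.sin A = QQ := by
    apply mul_right_cancel₀ Complex.I_ne_zero
    linear_combination he1 - hcosA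
  have hcosz : Complex.cos (zetaF kp θx (s:ℂ))
      = (2*P^2 - 1) * ((Real.cos θx : ℝ):ℂ) - 2*QQ*P*((Real.sin θx : ℝ):ℂ) := by
    rw [zetaF, hQf, ← hAd, Complex.cos_add, Complex.cos_two_mul, Complex.sin_two_mul,
      hcosA, hsinA, ← Complex.ofReal_cos, ← Complex.ofReal_sin]
    try ring
  -- the four half-angle atoms
  set su := QQ*(cA:ℂ) + P*(sA:ℂ) with hsud
  set cu := P*(cA:ℂ) - QQ*(sA:ℂ) with hcud
  set sv := QQ*(cB:ℂ) + P*(sB:ℂ) with hsvd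
  set cv := P*(cB:ℂ) - QQ*(sB:ℂ) with hcvd
  clear_value su cu sv cv
  have hfm : Complex.cos (zetaF kp θx (s:ℂ)) - ((km/kp : ℝ):ℂ) = -2 * su * sv := by
    rw [hcosz, hnC, hsud, hsvd]
    linear_combination ((Real.cos θx : ℝ):ℂ) * 0 + 2*(cA:ℂ)*(cB:ℂ)*hPQ1 +
      ((2*P^2 - 1)) * hcxC + (-(2*QQ*P)) * hsxC
  have hfp : Complex.cos (zetaF kp θx (s:ℂ)) + ((km/kp : ℝ):ℂ) = 2 * cu * cv := by
    rw [hcosz, hnC, hcud, hcvd]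
    linear_combination (-2*(sA:ℂ)*(sB:ℂ))*hPQ1 +
      ((2*P^2 - 1)) * hcxC + (-(2*QQ*P)) * hsxC

  -- Cartesian atoms
  have hEmC2 : Em = ((r/2 : ℝ):ℂ) * (1 - Complex.I) := by rw [hEmC]; push_cast; ring
  have hEpC2 : Ep = ((r/2 : ℝ):ℂ) * (1 + Complex.I) := by rw [hEpC]; push_cast; ring
  set aa := Em*su with haad
  set bb := Em*cu with hbbd
  set cc := Em*sv with hccd
  set dd := Em*cv with hddd
  set gg := Em*(QQ + (sA:ℂ)) with hggd
  set hh := Em*((cB:ℂ) - QQ) with hhhd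
  clear_value aa bb cc dd gg hh
  have haare : aa.re = r/2*((p+q)*sA) := by
    rw [haad, hsud, hQQd, hTd, hEmC2, hPC]
    simp [Complex.mul_re, Complex.mul_im, Complex.add_re, Complex.add_im, Complex.sub_re,
      Complex.sub_im, Complex.one_re, Complex.one_im, Complex.I_re, Complex.I_im,
      Complex.ofReal_re, Complex.ofReal_im]
    ring
  have hbbre : bb.re = r/2*((p+q)*cA) := by
    rw [hbbd, hcud, hQQd, hTd, hEmC2, hPC]
    simp [Complex.mul_re, Complex.mul_im, Complex.add_re, Complex.add_im, Complex.sub_re,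
      Complex.sub_im, Complex.one_re, Complex.one_im, Complex.I_re, Complex.I_im,
      Complex.ofReal_re, Complex.ofReal_im]
    ring
  have hccre : cc.re = r/2*((p+q)*sB) := by
    rw [hccd, hsvd, hQQd, hTd, hEmC2, hPC]
    simp [Complex.mul_re, Complex.mul_im, Complex.add_re, Complex.add_im, Complex.sub_re,
      Complex.sub_im, Complex.one_re, Complex.one_im, Complex.I_re, Complex.I_im,
      Complex.ofReal_re, Complex.ofReal_im]
    ring
  have hddre : dd.re = r/2*((p+q)*cB) := by
    rw [hddd, hcvd, hQQd, hTd, hEmC2, hPC]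
    simp [Complex.mul_re, Complex.mul_im, Complex.add_re, Complex.add_im, Complex.sub_re,
      Complex.sub_im, Complex.one_re, Complex.one_im, Complex.I_re, Complex.I_im,
      Complex.ofReal_re, Complex.ofReal_im]
    ring
  have hggre : gg.re = r/2*sA := by
    rw [hggd, hQQd, hTd, hEmC2]
    simp [Complex.mul_re, Complex.mul_im, Complex.add_re, Complex.add_im, Complex.sub_re,
      Complex.sub_im, Complex.one_re, Complex.one_im, Complex.I_re, Complex.I_im,
      Complex.ofReal_re, Complex.ofReal_im]
    ring
  have hhhre : hh.re = r/2*cB := by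
    rw [hhhd, hQQd, hTd, hEmC2]
    simp [Complex.mul_re, Complex.mul_im, Complex.add_re, Complex.add_im, Complex.sub_re,
      Complex.sub_im, Complex.one_re, Complex.one_im, Complex.I_re, Complex.I_im,
      Complex.ofReal_re, Complex.ofReal_im]
    ring
  have hhhim : hh.im = r/2*(r*t - cB) := by
    rw [hhhd, hQQd, hTd, hEmC2]
    simp [Complex.mul_re, Complex.mul_im, Complex.add_re, Complex.add_im, Complex.sub_re,
      Complex.sub_im, Complex.one_re, Complex.one_im, Complex.I_re, Complex.I_im,
      Complex.ofReal_re, Complex.ofReal_im]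
    ring
  have hcure : cu.re = p*cA - r/2*(t*sA) := by
    rw [hcud, hQQd, hTd, hEmC2, hPC]
    simp [Complex.mul_re, Complex.mul_im, Complex.add_re, Complex.add_im, Complex.sub_re,
      Complex.sub_im, Complex.one_re, Complex.one_im, Complex.I_re, Complex.I_im,
      Complex.ofReal_re, Complex.ofReal_im]
    ring
  have hsvre : sv.re = p*sB + r/2*(t*cB) := by
    rw [hsvd, hQQd, hTd, hEmC2, hPC]
    simp [Complex.mul_re, Complex.mul_im, Complex.add_re, Complex.add_im, Complex.sub_re,
      Complex.sub_im, Complex.one_re, Complex.one_im, Complex.I_re, Complex.I_im,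
      Complex.ofReal_re, Complex.ofReal_im]
    ring
  have hsvim : sv.im = q*sB - r/2*(t*cB) := by
    rw [hsvd, hQQd, hTd, hEmC2, hPC]
    simp [Complex.mul_re, Complex.mul_im, Complex.add_re, Complex.add_im, Complex.sub_re,
      Complex.sub_im, Complex.one_re, Complex.one_im, Complex.I_re, Complex.I_im,
      Complex.ofReal_re, Complex.ofReal_im]
    ring
  -- positivity facts
  have hr20 : (0:ℝ) < r/2 := by linarith
  have hpqsum : 0 < p + q := by linarith
  have haapos : 0 < aa.re := by rw [haare]; exact mul_pos hr20 (mul_pos hpqsum hsA0)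
  have hbbpos : 0 < bb.re := by rw [hbbre]; exact mul_pos hr20 (mul_pos hpqsum hcA0)
  have hccpos : 0 < cc.re := by rw [hccre]; exact mul_pos hr20 (mul_pos hpqsum hsB0)
  have hddpos : 0 < dd.re := by rw [hddre]; exact mul_pos hr20 (mul_pos hpqsum hcB0)
  have hggpos : 0 < gg.re := by rw [hggre]; exact mul_pos hr20 hsA0
  have hhhpos : 0 < hh.re := by rw [hhhre]; exact mul_pos hr20 hcB0
  have h1cupos : 0 < ((1:ℂ)+cu).re := by
    have h1 : ((1:ℂ)+cu).re = 1 + cu.re := by simp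
    rw [h1, hcure]
    exact ineq_1cu hp0 hr0 hr2 hrpt1 hsA0 hsAcA
  have hcaPre : ((cA:ℂ)+P).re = cA + p := by rw [hpd]; simp
  have hsbPre : ((sB:ℂ)+P).re = sB + p := by rw [hpd]; simp
  have hcaPpos : 0 < ((cA:ℂ)+P).re := by rw [hcaPre]; linarith
  have hsbPpos : 0 < ((sB:ℂ)+P).re := by rw [hsbPre]; linarith
  -- key factor identities
  have hKg : gg*((1:ℂ)+cu) = aa*((cA:ℂ)+P) := by
    rw [hggd, haad, hsud, hcud]
    linear_combination (-(Em*(sA:ℂ)))*hPQ1 + (-(Em*QQ))*hA1C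
  have hKh : hh*((1:ℂ)+sv) = dd*((sB:ℂ)+P) := by
    rw [hhhd, hddd, hsvd, hcvd]
    linear_combination (Em*QQ)*hB1C + (-(Em*(cB:ℂ)))*hPQ1
  have hg5 : csqrt gg * csqrt ((1:ℂ)+cu) = csqrt aa * csqrt ((cA:ℂ)+P) := by
    rw [← csqrt_mul_re hggpos h1cupos, hKg, csqrt_mul_re haapos hcaPpos]
  have hh5 : csqrt hh * csqrt ((1:ℂ)+sv) = csqrt dd * csqrt ((sB:ℂ)+P) := by
    rcases le_or_gt 0 t with ht | ht
    · have h1svpos : 0 < ((1:ℂ)+sv).re := by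
        have h1 : ((1:ℂ)+sv).re = 1 + sv.re := by simp
        rw [h1, hsvre]
        exact ineq_1sv_re hp0 hr0 ht hsB0 hcB0
      rw [← csqrt_mul_re hhhpos h1svpos, hKh, csqrt_mul_re hddpos hsbPpos]
    · have h1svim : 0 < ((1:ℂ)+sv).im := by
        have h1 : ((1:ℂ)+sv).im = sv.im := by simp
        rw [h1, hsvim]
        exact ineq_1sv_im hq0 hr0 ht hsB0 hcB0
      have h1svne : ((1:ℂ)+sv) ≠ 0 := by
        intro h0
        rw [h0] at h1svim; simp at h1svim
      have hhimneg : hh.im < 0 := by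
        rw [hhhim]
        exact ineq_hm hr0 ht hcB0
      rw [mul_comm (csqrt hh), ← csqrt_mul_im h1svim.le h1svne hhimneg,
        mul_comm ((1:ℂ)+sv), hKh, csqrt_mul_re hddpos hsbPpos]

  -- rotation constants
  set ε := Complex.exp ((((Real.pi/4)/2 : ℝ):ℂ)*Complex.I) with hεd
  have hεε : ε*ε = Ep := by
    rw [hεd, hEpd, ← Complex.exp_add]; congr 1; push_cast; ring
  have hEpcoe : Complex.exp (((Real.pi/4 : ℝ):ℂ)*Complex.I) = Ep := by
    rw [hEpd]; congr 1; push_cast; ring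
  have hEmcoe : Complex.exp (((-(Real.pi/2)/2 : ℝ):ℂ)*Complex.I) = Em := by
    rw [hEmd]; congr 1; push_cast; ring
  have hEpcoe2 : Complex.exp (((Real.pi/2/2 : ℝ):ℂ)*Complex.I) = Ep := by
    rw [hEpd]; congr 1; push_cast; ring
  have hmI : Complex.exp (((-(Real.pi/2) : ℝ):ℂ)*Complex.I) = -Complex.I := by
    rw [Complex.exp_mul_I, ← Complex.ofReal_cos, ← Complex.ofReal_sin, Real.cos_neg,
      Real.sin_neg, Real.cos_pi_div_two, Real.sin_pi_div_two]
    push_cast; ring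
  have hpI : Complex.exp (((Real.pi/2 : ℝ):ℂ)*Complex.I) = Complex.I := by
    rw [Complex.exp_mul_I, ← Complex.ofReal_cos, ← Complex.ofReal_sin,
      Real.cos_pi_div_two, Real.sin_pi_div_two]
    push_cast; ring
  have hsv5 : csqrt sv = ε * csqrt cc := by
    have h1 : sv = Complex.exp (((Real.pi/4 : ℝ):ℂ)*Complex.I) * cc := by
      rw [hEpcoe, hccd, ← mul_assoc, mul_comm Ep Em, hEmEp, one_mul]
    rw [h1, csqrt_exp_mul hb1 hb2 hccpos, ← hεd]
  have hcu5 : csqrt cu = ε * csqrt bb := by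
    have h1 : cu = Complex.exp (((Real.pi/4 : ℝ):ℂ)*Complex.I) * bb := by
      rw [hEpcoe, hbbd, ← mul_assoc, mul_comm Ep Em, hEmEp, one_mul]
    rw [h1, csqrt_exp_mul hb1 hb2 hbbpos, ← hεd]
  -- the two square-root factors
  have hsbsv : (s:ℂ) - sbs kp θc θx = ((k2:ℝ):ℂ) *
      (Complex.exp (((-(Real.pi/2) : ℝ):ℂ)*Complex.I) * hh) := by
    rw [sbs, ← hEpd, ← hk2d, hmI,
      show (Real.pi - θc - θx)/2 = Real.pi/2 - (θx+θc)/2 by ring,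
      Real.sin_pi_div_two_sub, ← hcBd, hhhd, hsC, hQQd]
    linear_combination (-Complex.I*((k2:ℝ):ℂ)*T)*hEm2 + (((k2:ℝ):ℂ)*T)*Complex.I_sq +
      (((k2:ℝ):ℂ)*(cB:ℂ))*hIEm
  have hXa : csqrt ((s:ℂ) - sbs kp θc θx) = ((Real.sqrt k2 : ℝ):ℂ) * (Em * csqrt hh) := by
    rw [hsbsv, csqrt_real_mul hk20.le, csqrt_exp_mul hb3 hb4 hhhpos, hEmcoe]
  have hsbv : (s:ℂ) - sb kp θc θx = ((k2:ℝ):ℂ) *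
      (Complex.exp (((Real.pi/2 : ℝ):ℂ)*Complex.I) * gg) := by
    rw [sb, ← hEpd, ← hk2d, hpI,
      show (θc - θx)/2 = -((θx-θc)/2) by ring, Real.sin_neg, ← hsAd, hggd, hsC, hQQd]
    push_cast
    linear_combination (-Complex.I*((k2:ℝ):ℂ)*T)*hEm2 + (((k2:ℝ):ℂ)*T)*Complex.I_sq +
      (-(((k2:ℝ):ℂ)*(sA:ℂ)))*hIEm
  have hXb : csqrt ((s:ℂ) - sb kp θc θx) = ((Real.sqrt k2 : ℝ):ℂ) * (Ep * csqrt gg) := by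
    rw [hsbv, csqrt_real_mul hk20.le, csqrt_exp_mul hb4 hb5 hggpos, hEpcoe2]
  -- the H factors
  have hHa : Hth kp θx θc (s:ℂ) = csqrt ((1:ℂ)+cu) * csqrt sv / csqrt ((cA:ℂ)+P) := by
    have e1 : F1f kp θx θc (s:ℂ) = (1:ℂ)+cu := by
      rw [F1f, hPf, hQf, show (θc - θx)/2 = -((θx-θc)/2) by ring, Real.cos_neg,
        Real.sin_neg, ← hcAd, ← hsAd, hcud]
      push_cast; ring
    have e2 : F2f kp θx θc (s:ℂ) = sv := by
      rw [F2f, hPf, hQf, show (θc + θx)/2 = (θx+θc)/2 by ring, ← hsBd, ← hcBd, hsvd]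
      ring
    have e3 : F3f kp θx θc (s:ℂ) = (cA:ℂ)+P := by
      rw [F3f, hPf, show (θc - θx)/2 = -((θx-θc)/2) by ring, Real.cos_neg, ← hcAd]
    rw [Hth, e1, e2, e3]
  have hHb : Hth kp θx (Real.pi - θc) (s:ℂ)
      = csqrt ((1:ℂ)+sv) * csqrt cu / csqrt ((sB:ℂ)+P) := by
    have e1 : F1f kp θx (Real.pi - θc) (s:ℂ) = (1:ℂ)+sv := by
      rw [F1f, hPf, hQf, show (Real.pi - θc - θx)/2 = Real.pi/2 - (θx+θc)/2 by ring,
        Real.cos_pi_div_two_sub, Real.sin_pi_div_two_sub, ← hsBd, ← hcBd, hsvd]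
      ring
    have e2 : F2f kp θx (Real.pi - θc) (s:ℂ) = cu := by
      rw [F2f, hPf, hQf, show (Real.pi - θc + θx)/2 = Real.pi/2 - (-((θx-θc)/2)) by ring,
        Real.sin_pi_div_two_sub, Real.cos_pi_div_two_sub, Real.cos_neg, Real.sin_neg,
        ← hcAd, ← hsAd, hcud]
      push_cast; ring
    have e3 : F3f kp θx (Real.pi - θc) (s:ℂ) = (sB:ℂ)+P := by
      rw [F3f, hPf, show (Real.pi - θc - θx)/2 = Real.pi/2 - (θx+θc)/2 by ring,
        Real.cos_pi_div_two_sub, ← hsBd]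
    rw [Hth, e1, e2, e3]
  -- RHS
  have hIzm : Complex.I * (Complex.cos (zetaF kp θx (s:ℂ)) - ((km/kp : ℝ):ℂ))
      = ((2:ℝ):ℂ) * (aa*cc) := by
    rw [hfm, haad, hccd]
    push_cast
    linear_combination (-2*su*sv)*hEm2
  have hIzp : -Complex.I * (Complex.cos (zetaF kp θx (s:ℂ)) + ((km/kp : ℝ):ℂ))
      = ((2:ℝ):ℂ) * (bb*dd) := by
    rw [hfp, hbbd, hddd]
    push_cast
    linear_combination (-2*cu*cv)*hEm2
  have hR2 : Sc (Complex.cos (zetaF kp θx (s:ℂ))) (km/kp)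
      = 2 * (csqrt aa * csqrt bb * csqrt cc * csqrt dd) := by
    rw [Sc, S1, S2, ← hEmd, ← hEpd, hIzm, hIzp, csqrt_real_mul (by norm_num) (aa*cc),
      csqrt_real_mul (by norm_num) (bb*dd), ← hrd, csqrt_mul_re haapos hccpos,
      csqrt_mul_re hbbpos hddpos]
    linear_combination (((r:ℝ):ℂ)^2 * (csqrt aa*csqrt bb*csqrt cc*csqrt dd)) * hEmEp +
      ((csqrt aa*csqrt bb*csqrt cc*csqrt dd)) * hr2C
  -- constants
  have h4 : (2/kp)*(2*kp) = 4 := by field_simp; ring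
  have hconst : ((Real.sqrt (2/kp) : ℝ):ℂ) * (((Real.sqrt k2:ℝ):ℂ) * ((Real.sqrt k2:ℝ):ℂ))
      = 2 := by
    have hre : Real.sqrt (2/kp) * (Real.sqrt k2 * Real.sqrt k2) = 2 := by
      rw [Real.mul_self_sqrt hk20.le, hk2d, ← Real.sqrt_mul (by positivity), h4,
        show (4:ℝ) = 2^2 by norm_num, Real.sqrt_sq (by norm_num)]
    exact_mod_cast congrArg (fun x:ℝ => (x:ℂ)) hre
  have hcsaP : csqrt ((cA:ℂ)+P) ≠ 0 := csqrt_ne_zero (_root_.ne_zero_of_re_pos hcaPpos)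
  have hcsbP : csqrt ((sB:ℂ)+P) ≠ 0 := csqrt_ne_zero (_root_.ne_zero_of_re_pos hsbPpos)
  have hunit : (Em * (ε*ε)) * (Em*Ep) = 1 := by rw [hεε, hEmEp]; norm_num
  have main : (((Real.sqrt (2/kp) : ℝ):ℂ)) * Em * (csqrt ((1:ℂ)+cu) * (ε*csqrt cc))
        * (csqrt ((1:ℂ)+sv) * (ε*csqrt bb)) * (((Real.sqrt k2:ℝ):ℂ) * (Em*csqrt hh))
        * (((Real.sqrt k2:ℝ):ℂ) * (Ep*csqrt gg))
      = 2 * (csqrt aa * csqrt bb * csqrt cc * csqrt dd)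
        * (csqrt ((cA:ℂ)+P) * csqrt ((sB:ℂ)+P)) := by
    calc (((Real.sqrt (2/kp) : ℝ):ℂ)) * Em * (csqrt ((1:ℂ)+cu) * (ε*csqrt cc))
        * (csqrt ((1:ℂ)+sv) * (ε*csqrt bb)) * (((Real.sqrt k2:ℝ):ℂ) * (Em*csqrt hh))
        * (((Real.sqrt k2:ℝ):ℂ) * (Ep*csqrt gg))
        = (((Real.sqrt (2/kp) : ℝ):ℂ) * (((Real.sqrt k2:ℝ):ℂ) * ((Real.sqrt k2:ℝ):ℂ)))
          * ((Em * (ε*ε)) * (Em*Ep))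
          * ((csqrt gg * csqrt ((1:ℂ)+cu)) * (csqrt hh * csqrt ((1:ℂ)+sv)))
          * (csqrt bb * csqrt cc) := by ring
      _ = 2 * (csqrt aa * csqrt bb * csqrt cc * csqrt dd)
          * (csqrt ((cA:ℂ)+P) * csqrt ((sB:ℂ)+P)) := by
          rw [hconst, hunit, hg5, hh5]; ring
  rw [hR2, hHa, hHb, hXa, hXb, hsv5, hcu5]
  exact divHelper17 hcsaP hcsbP (by linear_combination main)
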